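/- arXiv:2301.02053 — 3 statements merged into one kernel-verified Lean document; each statement's English description precedes it below -/
import Mathlib

section
/- Let (V,d) be a finite metric space and U a k-element subset produced by the Gonzalez greedy algorithm (start with any u_1 ∈ V; at each step add the point of V maximizing the minimum distance to the current set). Then div(U) ≥ (1/2)·OPT, where OPT is the maximum of div(S) over all k-element subsets S of V. -/
open scoped Classical

noncomputable def fdiv {V : Type*} [MetricSpace V] (S : Finset V) : ℝ :=
  sInf {r : ℝ | ∃ u ∈ S, ∃ v ∈ S, u ≠ v ∧ r = dist u v}

theorem stmt4 {V : Type*} [MetricSpace V] [Fintype V] (k : ℕ) (hk : 2 ≤ k) (u : ℕ → V)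
    (hinj : Set.InjOn u (Set.Iio k))
    (hgreedy : ∀ i (hi : 0 < i) (_ : i < k) (v : V),
      (Finset.range i).inf' (Finset.nonempty_range_iff.mpr (by omega)) (fun j => dist (u j) v) ≤
      (Finset.range i).inf' (Finset.nonempty_range_iff.mpr (by omega)) (fun j => dist (u j) (u i))) :
    ∀ S : Finset V, S.card = k → fdiv S ≤ 2 * fdiv ((Finset.range k).image u) := by
  intro S hS
  set m := k - 1 with hm
  have hm1 : 1 ≤ m := by omega
  have hmk : m < k := by omega
  -- insertion radius
  set R : ℕ → ℝ := fun i =>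
    if hi : i = 0 then 0 else
      (Finset.range i).inf' (Finset.nonempty_range_iff.mpr hi) (fun j => dist (u j) (u i))
    with hR
  have hRdef : ∀ i (hi : i ≠ 0), R i =
      (Finset.range i).inf' (Finset.nonempty_range_iff.mpr hi) (fun j => dist (u j) (u i)) := by
    intro i hi; simp [hR, hi]
  -- insertion radii are nonincreasing
  have step : ∀ i, 1 ≤ i → i + 1 < k → R (i + 1) ≤ R i := by
    intro i h1 h2
    rw [hRdef (i+1) (by omega), hRdef i (by omega)]
    calc (Finset.range (i+1)).inf' (Finset.nonempty_range_iff.mpr (by omega))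
          (fun j => dist (u j) (u (i+1)))
        ≤ (Finset.range i).inf' (Finset.nonempty_range_iff.mpr (by omega))
          (fun j => dist (u j) (u (i+1))) :=
          Finset.inf'_mono _ (by intro x hx; simp at hx ⊢; omega) _
      _ ≤ _ := hgreedy i (by omega) (by omega) (u (i+1))
  have mono : ∀ i, 1 ≤ i → i < k → R m ≤ R i := by
    intro i h1 h2
    obtain ⟨d, hd⟩ : ∃ d, i + d = m := ⟨m - i, by omega⟩
    induction d generalizing i with
    | zero => have : i = m := by omega
              rw [this]
    | succ d ih =>
        calc R m ≤ R (i + 1) := ih (i+1) (by omega) (by omega) (by omega)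
          _ ≤ R i := step i h1 (by omega)
  -- every pairwise distance in U is at least R m
  have pair : ∀ i j, i < j → j < k → R m ≤ dist (u i) (u j) := by
    intro i j hij hjk
    calc R m ≤ R j := mono j (by omega) hjk
      _ ≤ dist (u i) (u j) := by
          rw [hRdef j (by omega)]
          exact Finset.inf'_le _ (Finset.mem_range.mpr hij)
  -- fdiv U ≥ R m
  set U := (Finset.range k).image u with hU
  have hUmem : ∀ i, i < k → u i ∈ U := by
    intro i hi; exact Finset.mem_image.mpr ⟨i, Finset.mem_range.mpr hi, rfl⟩
  have hne01 : u 0 ≠ u 1 := by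
    intro h
    have := hinj (by simp; omega : (0:ℕ) ∈ Set.Iio k) (by simp; omega : (1:ℕ) ∈ Set.Iio k) h
    omega
  have hUlb : R m ≤ fdiv U := by
    apply le_csInf
    · exact ⟨dist (u 0) (u 1), u 0, hUmem 0 (by omega), u 1, hUmem 1 (by omega), hne01, rfl⟩
    · rintro r ⟨a, ha, b, hb, hab, rfl⟩
      obtain ⟨i, hi, rfl⟩ := Finset.mem_image.mp ha
      obtain ⟨j, hj, rfl⟩ := Finset.mem_image.mp hb
      simp only [Finset.mem_range] at hi hj
      have hij : i ≠ j := fun h => hab (by rw [h])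
      rcases lt_or_gt_of_ne hij with h | h
      · exact pair i j h hj
      · rw [dist_comm]; exact pair j i h hi
  -- every point is within R m of some u j, j < m
  have hcov : ∀ v : V, ∃ j, j ∈ Finset.range m ∧ dist (u j) v ≤ R m := by
    intro v
    have h1 := hgreedy m (by omega) hmk v
    obtain ⟨j, hj, hje⟩ := Finset.exists_mem_eq_inf'
      (Finset.nonempty_range_iff.mpr (by omega : m ≠ 0)) (fun j => dist (u j) v)
    refine ⟨j, hj, ?_⟩
    rw [hRdef m (by omega)]
    calc dist (u j) v = _ := hje.symm
      _ ≤ _ := h1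
  -- pigeonhole
  set f : V → ℕ := fun v => (hcov v).choose with hf
  have hfmem : ∀ v, f v ∈ Finset.range m := fun v => (hcov v).choose_spec.1
  have hfdist : ∀ v, dist (u (f v)) v ≤ R m := fun v => (hcov v).choose_spec.2
  obtain ⟨x, hx, y, hy, hxy, hfxy⟩ :=
    Finset.exists_ne_map_eq_of_card_lt_of_maps_to
      (by rw [hS, Finset.card_range]; omega : (Finset.range m).card < S.card)
      (fun a _ => hfmem a)
  have hxy2 : dist x y ≤ 2 * fdiv U := by
    calc dist x y ≤ dist x (u (f x)) + dist (u (f x)) y := dist_triangle _ _ _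
      _ = dist (u (f x)) x + dist (u (f y)) y := by rw [dist_comm, hfxy]
      _ ≤ R m + R m := add_le_add (hfdist x) (hfdist y)
      _ ≤ fdiv U + fdiv U := add_le_add hUlb hUlb
      _ = 2 * fdiv U := by ring
  have hSle : fdiv S ≤ dist x y := by
    apply csInf_le
    · exact ⟨0, by rintro r ⟨a, _, b, _, _, rfl⟩; exact dist_nonneg⟩
    · exact ⟨x, hx, y, hy, hxy, rfl⟩
  linarith
end

section
/- Let (V,d) be a finite metric space partitioned into groups V_1,…,V_C with fairness constraints giving feasible family F = {S : |S|=k ∧ ∀c, l_c ≤ |S∩V_c| ≤ h_c}, and let OPT = max_{S ∈ F} div(S). Fix d' with (2(1−ε)/5)·OPT ≤ d' ≤ (2/5)·OPT for some ε ∈ (0,1). Suppose for each group c a set U_c ⊆ V_c is constructed greedily such that div(U_c) ≥ d', and either |U_c| = k or every v ∈ V_c satisfies min_{u ∈ U_c} d(v,u) < d'. Then there exists S' ⊆ ⋃_c U_c with S' ∈ F and div(S') ≥ d'/2 ≥ ((1−ε)/5)·OPT. -/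
open scoped Classical

def Fair {V : Type*} {C : ℕ} (grp : V → Fin C) (l h : Fin C → ℕ) (k : ℕ) (S : Finset V) : Prop :=
  S.card = k ∧ ∀ c : Fin C, l c ≤ (S.filter (fun v => grp v = c)).card ∧
    (S.filter (fun v => grp v = c)).card ≤ h c

lemma fdiv_bddBelow {V : Type*} [MetricSpace V] (S : Finset V) :
    BddBelow {r : ℝ | ∃ u ∈ S, ∃ v ∈ S, u ≠ v ∧ r = dist u v} := by
  refine ⟨0, ?_⟩
  rintro r ⟨u, _, v, _, _, rfl⟩
  exact dist_nonneg

lemma fdiv_le_dist {V : Type*} [MetricSpace V] {S : Finset V} {u v : V}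
    (hu : u ∈ S) (hv : v ∈ S) (huv : u ≠ v) : fdiv S ≤ dist u v :=
  csInf_le (fdiv_bddBelow S) ⟨u, hu, v, hv, huv, rfl⟩

lemma fdiv_nonneg {V : Type*} [MetricSpace V] (S : Finset V) : 0 ≤ fdiv S := by
  apply Real.sInf_nonneg
  rintro r ⟨u, _, v, _, _, rfl⟩
  exact dist_nonneg

lemma le_fdiv {V : Type*} [MetricSpace V] {S : Finset V} {r : ℝ}
    (hne : ∃ u ∈ S, ∃ v ∈ S, u ≠ v)
    (hr : ∀ u ∈ S, ∀ v ∈ S, u ≠ v → r ≤ dist u v) : r ≤ fdiv S := by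
  obtain ⟨u, hu, v, hv, huv⟩ := hne
  refine le_csInf ⟨dist u v, u, hu, v, hv, huv, rfl⟩ ?_
  rintro b ⟨a, ha, b', hb', hab, rfl⟩
  exact hr a ha b' hb' hab

theorem stmt10 {V : Type*} [MetricSpace V] [Fintype V] {C : ℕ} (grp : V → Fin C)
    (l h : Fin C → ℕ) (k : ℕ) (ε OPT d' : ℝ) (hε : 0 < ε) (hε1 : ε < 1)
    (hOPT : IsGreatest {r : ℝ | ∃ S : Finset V, Fair grp l h k S ∧ r = fdiv S} OPT)
    (hd1 : 2 * (1 - ε) / 5 * OPT ≤ d') (hd2 : d' ≤ 2 / 5 * OPT)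
    (U : Fin C → Finset V)
    (hUgrp : ∀ c, ∀ v ∈ U c, grp v = c)
    (hUdiv : ∀ c, d' ≤ fdiv (U c))
    (hUalt : ∀ c, (U c).card = k ∨ ∀ v : V, grp v = c → ∃ u ∈ U c, dist v u < d') :
    ∃ S' : Finset V, S' ⊆ Finset.univ.biUnion U ∧ Fair grp l h k S' ∧
      d' / 2 ≤ fdiv S' ∧ (1 - ε) / 5 * OPT ≤ d' / 2 := by
  classical
  obtain ⟨⟨Sstar, hSfair, hOPTeq⟩, hub⟩ := hOPT
  -- OPT is a lower bound on distances within Sstar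
  have hOPTle : ∀ u ∈ Sstar, ∀ v ∈ Sstar, u ≠ v → OPT ≤ dist u v := by
    intro u hu v hv huv
    rw [hOPTeq]
    exact fdiv_le_dist hu hv huv
  have hOPT5 : 5 / 2 * d' ≤ OPT := by linarith
  -- group sizes of the optimal solution
  set s : Fin C → ℕ := fun c => (Sstar.filter (fun v => grp v = c)).card with hs
  have hsum : ∑ c : Fin C, s c = k := by
    rw [← hSfair.1]
    exact (Finset.card_eq_sum_card_fiberwise (fun v _ => Finset.mem_univ (grp v))).symm
  -- the set of "case B" groups
  set BB : Finset (Fin C) :=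
    Finset.univ.filter (fun c => ∀ v : V, grp v = c → ∃ u ∈ U c, dist v u < d') with hBB
  have hcardk : ∀ c ∉ BB, (U c).card = k := by
    intro c hc
    rcases hUalt c with h1 | h2
    · exact h1
    · exact absurd (Finset.mem_filter.mpr ⟨Finset.mem_univ c, h2⟩) hc
  -- nearest-neighbor choice map for case B groups
  have hex : ∀ v : V, ∃ u : V, grp v ∈ BB → (u ∈ U (grp v) ∧ dist v u < d') := by
    intro v
    by_cases hv : grp v ∈ BB
    · obtain ⟨u, hu, hud⟩ := (Finset.mem_filter.mp hv).2 v rfl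
      exact ⟨u, fun _ => ⟨hu, hud⟩⟩
    · exact ⟨v, fun hv' => absurd hv' hv⟩
  choose f hf using hex
  have hfU : ∀ v : V, grp v ∈ BB → f v ∈ U (grp v) := fun v hv => (hf v hv).1
  have hfd : ∀ v : V, grp v ∈ BB → dist v (f v) < d' := fun v hv => (hf v hv).2
  have hfgrp : ∀ v : V, grp v ∈ BB → grp (f v) = grp v := fun v hv =>
    hUgrp (grp v) (f v) (hfU v hv)
  -- base set : images of Sstar points in case B groups
  set T0 : Finset V := (Sstar.filter (fun v => grp v ∈ BB)).image f with hT0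
  have hfinj : Set.InjOn f (Sstar.filter (fun v => grp v ∈ BB)) := by
    intro v1 hv1 v2 hv2 hfe
    by_contra hne
    simp only [Finset.coe_filter, Set.mem_setOf_eq] at hv1 hv2
    obtain ⟨hv1S, hv1B⟩ := hv1
    obtain ⟨hv2S, hv2B⟩ := hv2
    have hd'pos : 0 < d' := lt_of_le_of_lt dist_nonneg (hfd v1 hv1B)
    have h1 : OPT ≤ dist v1 v2 := hOPTle v1 hv1S v2 hv2S hne
    have h2 : dist v1 v2 ≤ dist v1 (f v1) + dist (f v2) v2 := by
      calc dist v1 v2 ≤ dist v1 (f v1) + dist (f v1) v2 := dist_triangle _ _ _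
        _ = dist v1 (f v1) + dist (f v2) v2 := by rw [hfe, dist_comm]
    have h3 : dist (f v2) v2 < d' := by rw [dist_comm]; exact hfd v2 hv2B
    have := hfd v1 hv1B
    linarith
  -- witness property for elements of T0
  have hT0wit : ∀ u ∈ T0, ∃ v ∈ Sstar, grp v ∈ BB ∧ f v = u := by
    intro u hu
    obtain ⟨v, hv, rfl⟩ := Finset.mem_image.mp hu
    obtain ⟨hvS, hvB⟩ := Finset.mem_filter.mp hv
    exact ⟨v, hvS, hvB, rfl⟩
  -- main induction over the set of case A groups to process
  have main : ∀ A : Finset (Fin C), A ⊆ BBᶜ →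
      ∃ T : Finset V, T ⊆ Finset.univ.biUnion U ∧
        (∀ c : Fin C, (T.filter (fun v => grp v = c)).card
            = if c ∈ BB ∪ A then s c else 0) ∧
        (∀ u1 ∈ T, ∀ u2 ∈ T, u1 ≠ u2 → d' / 2 ≤ dist u1 u2) := by
    intro A
    induction A using Finset.induction_on with
    | empty =>
      intro _
      refine ⟨T0, ?_, ?_, ?_⟩
      · intro u hu
        obtain ⟨v, hvS, hvB, rfl⟩ := hT0wit u hu
        exact Finset.mem_biUnion.mpr ⟨grp v, Finset.mem_univ _, hfU v hvB⟩
      · intro c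
        rw [Finset.union_empty]
        by_cases hc : c ∈ BB
        · rw [if_pos hc]
          have hseteq : T0.filter (fun v => grp v = c)
              = (Sstar.filter (fun v => grp v = c)).image f := by
            ext u
            simp only [Finset.mem_filter, Finset.mem_image, hT0]
            constructor
            · rintro ⟨⟨v, hv, rfl⟩, hgu⟩
              obtain ⟨hvS, hvB⟩ := hv
              exact ⟨v, ⟨hvS, by rw [← hfgrp v hvB]; exact hgu⟩, rfl⟩
            · rintro ⟨v, hv, rfl⟩
              obtain ⟨hvS, hgv⟩ := hv
              have hvB : grp v ∈ BB := hgv ▸ hc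
              exact ⟨⟨v, ⟨hvS, hvB⟩, rfl⟩, by rw [hfgrp v hvB]; exact hgv⟩
          rw [hseteq]
          apply Finset.card_image_of_injOn
          apply hfinj.mono
          intro v hv
          simp only [Finset.coe_filter, Set.mem_setOf_eq] at hv ⊢
          exact ⟨hv.1, hv.2 ▸ hc⟩
        · rw [if_neg hc, Finset.card_eq_zero, Finset.filter_eq_empty_iff]
          intro u hu
          obtain ⟨v, _, hvB, rfl⟩ := hT0wit u hu
          rw [hfgrp v hvB]
          intro hc'
          exact hc (hc' ▸ hvB)
      · intro u1 hu1 u2 hu2 hne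
        obtain ⟨v1, hv1S, hv1B, rfl⟩ := hT0wit u1 hu1
        obtain ⟨v2, hv2S, hv2B, rfl⟩ := hT0wit u2 hu2
        have hvne : v1 ≠ v2 := fun he => hne (he ▸ rfl)
        have h1 : OPT ≤ dist v1 v2 := hOPTle v1 hv1S v2 hv2S hvne
        have h2 : dist v1 v2 ≤ dist v1 (f v1) + dist (f v1) (f v2) + dist (f v2) v2 :=
          dist_triangle4 _ _ _ _
        have h3 := hfd v1 hv1B
        have h4 : dist (f v2) v2 < d' := by rw [dist_comm]; exact hfd v2 hv2B
        linarith
    | @insert c A' hcA' ih =>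
      intro hAsub
      have hcB : c ∉ BB := by
        have := hAsub (Finset.mem_insert_self c A')
        simpa using this
      have hA'sub : A' ⊆ BBᶜ := fun x hx => hAsub (Finset.mem_insert_of_mem hx)
      obtain ⟨T', hT'sub, hT'card, hT'div⟩ := ih hA'sub
      -- card of T'
      have hT'cardeq : T'.card = ∑ c' ∈ BB ∪ A', s c' := by
        rw [Finset.card_eq_sum_card_fiberwise (fun v _ => Finset.mem_univ (grp v))]
        rw [Finset.sum_congr rfl (fun c' _ => hT'card c')]
        rw [Finset.sum_ite_mem, Finset.univ_inter]
      have hcBA' : c ∉ BB ∪ A' := by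
        simp only [Finset.mem_union]
        rintro (h1 | h2)
        · exact hcB h1
        · exact hcA' h2
      have hTbound : T'.card + s c ≤ k := by
        rw [hT'cardeq, ← hsum]
        have : ∑ c' ∈ insert c (BB ∪ A'), s c' ≤ ∑ c' : Fin C, s c' :=
          Finset.sum_le_sum_of_subset (Finset.subset_univ _)
        rwa [Finset.sum_insert hcBA', add_comm] at this
      -- blocked points of U c
      set Blk : Finset V := (U c).filter (fun u => ∃ t ∈ T', dist t u < d' / 2) with hBlk
      have hBlkwit : ∀ u ∈ Blk, ∃ t ∈ T', dist t u < d' / 2 := by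
        intro u hu
        exact (Finset.mem_filter.mp hu).2
      choose g hg1 hg2 using hBlkwit
      have hBlkcard : Blk.card ≤ T'.card := by
        apply Finset.card_le_card_of_injOn (fun u => if hu : u ∈ Blk then g u hu else u)
        · intro u hu
          simp only [Finset.mem_coe] at hu ⊢
          simp only [dif_pos hu]
          exact hg1 u hu
        · intro u1 hu1 u2 hu2 he
          simp only [Finset.mem_coe] at hu1 hu2
          simp only [dif_pos hu1, dif_pos hu2] at he
          by_contra hne
          have hU1 : u1 ∈ U c := (Finset.mem_filter.mp hu1).1
          have hU2 : u2 ∈ U c := (Finset.mem_filter.mp hu2).1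
          have hdd : d' ≤ dist u1 u2 :=
            le_trans (hUdiv c) (fdiv_le_dist hU1 hU2 hne)
          have h1 : dist (g u1 hu1) u1 < d' / 2 := hg2 u1 hu1
          have h2 : dist (g u2 hu2) u2 < d' / 2 := hg2 u2 hu2
          have h3 : dist u1 u2 ≤ dist (g u1 hu1) u1 + dist (g u2 hu2) u2 := by
            calc dist u1 u2 ≤ dist u1 (g u1 hu1) + dist (g u1 hu1) u2 := dist_triangle _ _ _
              _ = dist (g u1 hu1) u1 + dist (g u2 hu2) u2 := by
                  rw [dist_comm u1, he, dist_comm _ u2]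
          linarith
      -- pick s c unblocked points
      have hBlksub : Blk ⊆ U c := Finset.filter_subset _ _
      have hfree : s c ≤ ((U c) \ Blk).card := by
        rw [Finset.card_sdiff_of_subset hBlksub, hcardk c hcB]
        omega
      obtain ⟨W, hWsub, hWcard⟩ := Finset.exists_subset_card_eq hfree
      have hWU : W ⊆ U c := hWsub.trans (Finset.sdiff_subset)
      have hWgrp : ∀ w ∈ W, grp w = c := fun w hw => hUgrp c w (hWU hw)
      -- T' has no elements in group c
      have hT'c : ∀ v ∈ T', grp v ≠ c := by
        intro v hv hgv
        have h0 := hT'card c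
        rw [if_neg hcBA', Finset.card_eq_zero, Finset.filter_eq_empty_iff] at h0
        exact h0 hv hgv
      refine ⟨T' ∪ W, ?_, ?_, ?_⟩
      · intro v hv
        rcases Finset.mem_union.mp hv with hv | hv
        · exact hT'sub hv
        · exact Finset.mem_biUnion.mpr ⟨c, Finset.mem_univ _, hWU hv⟩
      · intro c'
        rw [Finset.filter_union]
        by_cases hcc : c' = c
        · subst hcc
          have h1 : T'.filter (fun v => grp v = c') = ∅ := by
            rw [Finset.filter_eq_empty_iff]
            exact fun v hv => hT'c v hv
          have h2 : W.filter (fun v => grp v = c') = W :=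
            Finset.filter_true_of_mem hWgrp
          rw [h1, h2, Finset.empty_union, hWcard,
            if_pos (Finset.mem_union_right _ (Finset.mem_insert_self c' A'))]
        · have h2 : W.filter (fun v => grp v = c') = ∅ := by
            rw [Finset.filter_eq_empty_iff]
            intro w hw hgw
            exact hcc (hgw ▸ (hWgrp w hw).symm ▸ hWgrp w hw)
          have hmem : (c' ∈ BB ∪ insert c A') ↔ (c' ∈ BB ∪ A') := by
            simp only [Finset.mem_union, Finset.mem_insert]
            tauto
          rw [h2, Finset.union_empty, hT'card c']
          by_cases hc' : c' ∈ BB ∪ A'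
          · rw [if_pos hc', if_pos (hmem.mpr hc')]
          · rw [if_neg hc', if_neg (fun hh => hc' (hmem.mp hh))]
      · intro u1 hu1 u2 hu2 hne
        have key : ∀ t ∈ T', ∀ w ∈ W, d' / 2 ≤ dist t w := by
          intro t ht w hw
          by_contra hlt
          push_neg at hlt
          have : w ∈ Blk := Finset.mem_filter.mpr ⟨hWU hw, t, ht, hlt⟩
          exact (Finset.mem_sdiff.mp (hWsub hw)).2 this
        rcases Finset.mem_union.mp hu1 with h1 | h1 <;>
          rcases Finset.mem_union.mp hu2 with h2 | h2
        · exact hT'div u1 h1 u2 h2 hne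
        · exact key u1 h1 u2 h2
        · rw [dist_comm]; exact key u2 h2 u1 h1
        · have hdd : d' ≤ dist u1 u2 :=
            le_trans (hUdiv c) (fdiv_le_dist (hWU h1) (hWU h2) hne)
          rcases le_or_gt 0 d' with hd0 | hd0
          · linarith
          · linarith [dist_nonneg (x := u1) (y := u2)]
  -- apply the induction to all case A groups
  obtain ⟨T, hTsub, hTcard, hTdiv⟩ := main BBᶜ (le_refl _)
  have hTcard' : ∀ c : Fin C, (T.filter (fun v => grp v = c)).card = s c := by
    intro c
    rw [hTcard c, if_pos]
    simp only [Finset.mem_union, Finset.mem_compl]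
    tauto
  have hTk : T.card = k := by
    rw [Finset.card_eq_sum_card_fiberwise (fun v _ => Finset.mem_univ (grp v)),
      Finset.sum_congr rfl (fun c _ => hTcard' c), hsum]
  refine ⟨T, hTsub, ⟨hTk, fun c => by rw [hTcard' c]; exact hSfair.2 c⟩, ?_, by linarith⟩
  -- diversity bound
  by_cases hpair : ∃ u ∈ T, ∃ v ∈ T, u ≠ v
  · exact le_fdiv hpair hTdiv
  · -- T has at most one element, hence so does Sstar, so OPT = 0 and d' ≤ 0
    have hT1 : T.card ≤ 1 := by
      by_contra hcon
      push_neg at hcon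
      obtain ⟨u, hu, v, hv, huv⟩ := Finset.one_lt_card.mp hcon
      exact hpair ⟨u, hu, v, hv, huv⟩
    have hS1 : Sstar.card ≤ 1 := by rw [hSfair.1, ← hTk]; exact hT1
    have hOPT0 : OPT = 0 := by
      rw [hOPTeq]
      unfold fdiv
      convert Real.sInf_empty using 2
      rw [Set.eq_empty_iff_forall_notMem]
      rintro r ⟨u, hu, v, hv, huv, rfl⟩
      exact huv (Finset.card_le_one.mp hS1 u hu v hv)
    have : d' ≤ 0 := by rw [hOPT0] at hd2; linarith
    linarith [fdiv_nonneg T]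
end

section
/- Let (V,d) be a finite metric space, k ≥ 2, and OPT = max_{|S|=k} div(S). Suppose U ⊆ V with |U| = k−1 arbitrary. Then there exist two distinct points s, s' of any optimal set S* mapped to a common element of U under the nearest-neighbor map, and hence min_{u ∈ U} d(v,u) ≥ OPT/2 for some v ∈ V. In particular, at every step of the greedy algorithm with current set of size < k, the farthest point is at distance ≥ OPT/2 from the current set. -/
open scoped Classical

theorem stmt13 {V : Type*} [MetricSpace V] [Fintype V] (k : ℕ) (hk : 2 ≤ k) (OPT : ℝ)
    (hOPT : IsGreatest {r : ℝ | ∃ S : Finset V, S.card = k ∧ r = fdiv S} OPT)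
    (U : Finset V) (hU : U.card = k - 1) :
    (∀ Sstar : Finset V, Sstar.card = k → fdiv Sstar = OPT →
      ∀ f : V → V, (∀ v : V, f v ∈ U) →
        ∃ s ∈ Sstar, ∃ s' ∈ Sstar, s ≠ s' ∧ f s = f s') ∧
    (∃ v : V, ∀ u ∈ U, OPT / 2 ≤ dist v u) := by
  have hUne : U.Nonempty := Finset.card_pos.mp (by omega)
  constructor
  · intro Sstar hcard hdiv f hf
    obtain ⟨s, hs, s', hs', hne, heq⟩ :=
      Finset.exists_ne_map_eq_of_card_lt_of_maps_to
        (s := Sstar) (t := U) (by rw [hcard, hU]; omega) (fun v _ => hf v)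
    exact ⟨s, hs, s', hs', hne, heq⟩
  · obtain ⟨Sstar, hcard, hOPTeq⟩ := hOPT.1
    choose g hg1 hg2 using fun v => U.exists_min_image (fun u => dist v u) hUne
    obtain ⟨s, hs, s', hs', hne, heq⟩ :=
      Finset.exists_ne_map_eq_of_card_lt_of_maps_to
        (s := Sstar) (t := U) (by rw [hcard, hU]; omega) (fun v _ => hg1 v)
    have hOPTle : OPT ≤ dist s s' := by
      rw [hOPTeq]
      apply csInf_le
      · refine ⟨0, fun r hr => ?_⟩
        obtain ⟨u, _, v, _, _, hreq⟩ := hr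
        exact hreq ▸ dist_nonneg
      · exact ⟨s, hs, s', hs', hne, rfl⟩
    have htri : dist s s' ≤ dist s (g s) + dist s' (g s) := by
      calc dist s s' ≤ dist s (g s) + dist (g s) s' := dist_triangle _ _ _
        _ = dist s (g s) + dist s' (g s) := by rw [dist_comm (g s) s']
    by_cases hc : OPT / 2 ≤ dist s (g s)
    · exact ⟨s, fun u hu => le_trans hc (hg2 s u hu)⟩
    · refine ⟨s', fun u hu => ?_⟩
      push_neg at hc
      have h2 : OPT / 2 ≤ dist s' (g s') := by
        rw [← heq]; linarith
      exact le_trans h2 (hg2 s' u hu)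
end
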